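/- The hypercube graph Q_d (d ≥ 1) is dispersable: mbt(Q_d) = d. -/

import Mathlib

open SimpleGraph
open scoped Classical

/-- A matching book embedding of `G` in `k` pages: a linear order (spine) on the
vertices together with a page assignment for the edges such that each page is a
matching (every vertex has degree at most one per page) and edges on the same
page do not cross with respect to the spine order. -/
structure MatchingBookEmbedding {V : Type*} [Fintype V] (G : SimpleGraph V) (k : ℕ) where
  ord : V ≃ Fin (Fintype.card V)
  page : G.edgeSet → Fin k
  matching : ∀ e f : G.edgeSet, e ≠ f → page e = page f →
    ∀ v : V, v ∈ (e : Sym2 V) → v ∉ (f : Sym2 V)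
  noncross : ∀ e f : G.edgeSet, page e = page f →
    ∀ a b c d : V, (e : Sym2 V) = s(a, b) → (f : Sym2 V) = s(c, d) →
      ord a < ord c → ord c < ord b → ord b < ord d → False

/-- The matching book thickness: the minimum number of pages over all matching
book embeddings. -/
noncomputable def mbt {V : Type*} [Fintype V] (G : SimpleGraph V) : ℕ :=
  sInf {k | Nonempty (MatchingBookEmbedding G k)}

/-- The `d`-dimensional hypercube graph: vertices are binary strings of length
`d`, adjacent iff they differ in exactly one coordinate. -/
def hypercubeGraph (d : ℕ) : SimpleGraph (Fin d → Bool) where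
  Adj x y := hammingDist x y = 1
  symm := ⟨fun x y h => by show hammingDist y x = 1; rwa [hammingDist_comm]⟩
  loopless := ⟨fun x h => by simp only [hammingDist_self] at h; exact one_ne_zero h.symm⟩

namespace HCaux


/-- suffix parity bit `j` of `x` (as 0 or 1). -/
noncomputable def bit (d j : ℕ) (x : Fin d → Bool) : ℕ :=
  (Finset.univ.filter (fun k : Fin d => j ≤ (k : ℕ) ∧ x k = true)).card % 2

lemma bit_le_one (d j : ℕ) (x : Fin d → Bool) : bit d j x ≤ 1 :=
  Nat.lt_succ_iff.mp (Nat.mod_lt _ (by norm_num))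

/-- Gray-code position of `x`. -/
noncomputable def pos (d : ℕ) (x : Fin d → Bool) : ℕ :=
  ∑ j ∈ Finset.range d, bit d j x * 2 ^ j

lemma bit_ge (d j : ℕ) (x : Fin d → Bool) (hj : d ≤ j) : bit d j x = 0 := by
  have : (Finset.univ.filter (fun k : Fin d => j ≤ (k : ℕ) ∧ x k = true)) = ∅ := by
    ext k
    simp only [Finset.mem_filter, Finset.mem_univ, true_and, Finset.notMem_empty, iff_false]
    rintro ⟨h1, _⟩
    exact absurd (lt_of_lt_of_le k.isLt hj) (not_lt.mpr h1)
  simp [bit, this]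

lemma bit_rec (d j : ℕ) (x : Fin d → Bool) (hj : j < d) :
    bit d j x = ((if x ⟨j, hj⟩ then 1 else 0) + bit d (j + 1) x) % 2 := by
  classical
  set S : Finset (Fin d) := Finset.univ.filter (fun k : Fin d => j ≤ (k : ℕ) ∧ x k = true)
  set T : Finset (Fin d) := Finset.univ.filter (fun k : Fin d => j + 1 ≤ (k : ℕ) ∧ x k = true)
  by_cases hx : x ⟨j, hj⟩ = true
  · have hS : S = insert ⟨j, hj⟩ T := by
      ext k
      simp only [S, T, Finset.mem_filter, Finset.mem_univ, true_and, Finset.mem_insert]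
      constructor
      · rintro ⟨h1, h2⟩
        rcases eq_or_lt_of_le h1 with h | h
        · left; exact (Fin.ext h.symm)
        · right; exact ⟨h, h2⟩
      · rintro (rfl | ⟨h1, h2⟩)
        · exact ⟨le_refl _, hx⟩
        · exact ⟨Nat.le_of_succ_le h1, h2⟩
    have hnm : (⟨j, hj⟩ : Fin d) ∉ T := by
      simp [T]
    have : S.card = T.card + 1 := by rw [hS, Finset.card_insert_of_notMem hnm]
    have hb : bit d (j + 1) x = T.card % 2 := rfl
    show S.card % 2 = _
    rw [this]
    simp only [hx, if_true]
    omega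
  · have hS : S = T := by
      ext k
      simp only [S, T, Finset.mem_filter, Finset.mem_univ, true_and]
      constructor
      · rintro ⟨h1, h2⟩
        refine ⟨?_, h2⟩
        rcases eq_or_lt_of_le h1 with h | h
        · exact absurd h2 (by rw [show k = ⟨j, hj⟩ from Fin.ext h.symm]; simp [hx])
        · exact h
      · rintro ⟨h1, h2⟩
        exact ⟨Nat.le_of_succ_le h1, h2⟩
    have hb : bit d (j + 1) x = T.card % 2 := rfl
    show S.card % 2 = _
    rw [hS]
    rw [if_neg hx]
    omega


lemma binary_unique (m : ℕ) : ∀ (b c : ℕ → ℕ), (∀ j, b j ≤ 1) → (∀ j, c j ≤ 1) →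
    (∑ j ∈ Finset.range m, b j * 2 ^ j) = (∑ j ∈ Finset.range m, c j * 2 ^ j) →
    ∀ j < m, b j = c j := by
  induction m with
  | zero => intro b c _ _ _ j hj; omega
  | succ n ih =>
    intro b c hb hc hsum j hj
    rw [Finset.sum_range_succ', Finset.sum_range_succ'] at hsum
    have hfac : ∀ (f : ℕ → ℕ), (∑ k ∈ Finset.range n, f (k + 1) * 2 ^ (k + 1))
        = 2 * ∑ k ∈ Finset.range n, f (k + 1) * 2 ^ k := by
      intro f
      rw [Finset.mul_sum]
      refine Finset.sum_congr rfl fun k _ => by ring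
    rw [hfac b, hfac c] at hsum
    simp only [pow_zero, mul_one] at hsum
    have hb0 := hb 0
    have hc0 := hc 0
    have h0 : b 0 = c 0 := by omega
    have hS : (∑ k ∈ Finset.range n, b (k + 1) * 2 ^ k)
        = ∑ k ∈ Finset.range n, c (k + 1) * 2 ^ k := by omega
    rcases j with _ | j
    · exact h0
    · exact ih (fun k => b (k + 1)) (fun k => c (k + 1)) (fun k => hb _) (fun k => hc _) hS j
        (by omega)

lemma sum_bits_lt (m : ℕ) (b : ℕ → ℕ) (hb : ∀ j, b j ≤ 1) :
    (∑ j ∈ Finset.range m, b j * 2 ^ j) < 2 ^ m := by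
  induction m with
  | zero => simp
  | succ n ih =>
    rw [Finset.sum_range_succ, pow_succ]
    have := hb n
    have h2 : b n * 2 ^ n ≤ 2 ^ n := by
      calc b n * 2 ^ n ≤ 1 * 2 ^ n := Nat.mul_le_mul_right _ this
      _ = 2 ^ n := one_mul _
    omega

lemma sum_pows (m : ℕ) : (∑ j ∈ Finset.range m, 2 ^ j) + 1 = 2 ^ m := by
  induction m with
  | zero => simp
  | succ n ih => rw [Finset.sum_range_succ, pow_succ]; omega

lemma pos_lt (d : ℕ) (x : Fin d → Bool) : pos d x < 2 ^ d :=
  sum_bits_lt d _ (fun j => bit_le_one d j x)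

lemma bits_inj {d : ℕ} {x y : Fin d → Bool} (h : ∀ j, bit d j x = bit d j y) : x = y := by
  funext k
  obtain ⟨j, hj⟩ := k
  have h1 := bit_rec d j x hj
  have h2 := bit_rec d j y hj
  rw [h j, h (j + 1)] at h1
  rw [h1] at h2
  have hby := bit_le_one d (j + 1) y
  by_cases hx : x ⟨j, hj⟩ <;> by_cases hy : y ⟨j, hj⟩ <;>
    simp [hx, hy] at h2 ⊢ <;> omega

lemma pos_inj (d : ℕ) : Function.Injective (pos d) := by
  intro x y h
  apply bits_inj
  intro j
  by_cases hj : j < d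
  · exact binary_unique d _ _ (fun j => bit_le_one d j x) (fun j => bit_le_one d j y) h j hj
  · rw [bit_ge d j x (by omega), bit_ge d j y (by omega)]

noncomputable def ordEquiv (d : ℕ) : (Fin d → Bool) ≃ Fin (2 ^ d) :=
  Equiv.ofBijective (fun x => ⟨pos d x, pos_lt d x⟩)
    ((Fintype.bijective_iff_injective_and_card _).mpr
      ⟨fun x y h => pos_inj d (by simpa using congrArg Fin.val h), by simp⟩)


section Edge

variable {d : ℕ} {i : Fin d} {x y : Fin d → Bool}

/-- bits above the flipped coordinate agree. -/
lemma bit_high (hk : ∀ k, k ≠ i → x k = y k) {j : ℕ} (hj : (i : ℕ) < j) :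
    bit d j x = bit d j y := by
  have hset : (Finset.univ.filter (fun k : Fin d => j ≤ (k : ℕ) ∧ x k = true))
      = Finset.univ.filter (fun k : Fin d => j ≤ (k : ℕ) ∧ y k = true) := by
    ext k
    simp only [Finset.mem_filter, Finset.mem_univ, true_and]
    have hxk : ∀ (h1 : j ≤ (k : ℕ)), x k = y k := fun h1 => hk k (by
      intro h; subst h; omega)
    constructor
    · rintro ⟨h1, h2⟩; exact ⟨h1, (hxk h1) ▸ h2⟩
    · rintro ⟨h1, h2⟩; exact ⟨h1, (hxk h1) ▸ h2⟩
  unfold bit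
  rw [hset]

lemma bit_low_aux (hxi : x i = true) (hyi : y i = false)
    (hk : ∀ k, k ≠ i → x k = y k) {j : ℕ} (hj : j ≤ (i : ℕ)) :
    bit d j x + bit d j y = 1 := by
  classical
  set S : Finset (Fin d) := Finset.univ.filter (fun k : Fin d => j ≤ (k : ℕ) ∧ x k = true)
  set T : Finset (Fin d) := Finset.univ.filter (fun k : Fin d => j ≤ (k : ℕ) ∧ y k = true)
  have hiS : i ∈ S := by simp [S, hj, hxi]
  have hT : T = S.erase i := by
    ext k
    simp only [T, S, Finset.mem_filter, Finset.mem_univ, true_and, Finset.mem_erase]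
    by_cases hki : k = i
    · subst hki; simp [hyi]
    · rw [hk k hki]; tauto
  have hcard : S.card = T.card + 1 := by
    rw [hT, Finset.card_erase_of_mem hiS]
    have : 1 ≤ S.card := Finset.card_pos.mpr ⟨i, hiS⟩
    omega
  show S.card % 2 + T.card % 2 = 1
  omega

lemma bit_low (hxy : x i ≠ y i) (hk : ∀ k, k ≠ i → x k = y k) {j : ℕ} (hj : j ≤ (i : ℕ)) :
    bit d j x + bit d j y = 1 := by
  by_cases hxi : x i = true
  · have hyi : y i = false := by revert hxy; cases y i <;> simp [hxi]
    exact bit_low_aux hxi hyi hk hj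
  · have hxi' : x i = false := by revert hxi; cases x i <;> simp
    have hyi : y i = true := by revert hxy; cases y i <;> simp [hxi']
    rw [Nat.add_comm]
    exact bit_low_aux hyi hxi' (fun k h => (hk k h).symm) hj

/-- decomposition of `pos` relative to the flipped coordinate. -/
lemma pos_decomp (x : Fin d → Bool) (i : Fin d) :
    pos d x = 2 ^ ((i : ℕ) + 1) * (∑ t ∈ Finset.range (d - ((i : ℕ) + 1)),
      bit d ((i : ℕ) + 1 + t) x * 2 ^ t) + ∑ j ∈ Finset.range ((i : ℕ) + 1), bit d j x * 2 ^ j := by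
  have hid : (i : ℕ) + 1 ≤ d := i.isLt
  have hsplit : (∑ j ∈ Finset.Ico 0 ((i : ℕ) + 1), bit d j x * 2 ^ j)
      + ∑ j ∈ Finset.Ico ((i : ℕ) + 1) d, bit d j x * 2 ^ j
      = ∑ j ∈ Finset.Ico 0 d, bit d j x * 2 ^ j :=
    Finset.sum_Ico_consecutive _ (Nat.zero_le _) hid
  have h1 : pos d x = ∑ j ∈ Finset.Ico 0 d, bit d j x * 2 ^ j := by
    rw [pos, Finset.range_eq_Ico]
  have h2 : (∑ j ∈ Finset.Ico ((i : ℕ) + 1) d, bit d j x * 2 ^ j)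
      = 2 ^ ((i : ℕ) + 1) * ∑ t ∈ Finset.range (d - ((i : ℕ) + 1)),
          bit d ((i : ℕ) + 1 + t) x * 2 ^ t := by
    rw [Finset.sum_Ico_eq_sum_range, Finset.mul_sum]
    refine Finset.sum_congr rfl fun t _ => ?_
    rw [pow_add]; ring
  rw [h1, ← hsplit, h2, Finset.range_eq_Ico, Finset.range_eq_Ico]
  ring

/-- the key structural fact for an edge flipping coordinate `i`. -/
lemma edge_pos (hxy : x i ≠ y i) (hk : ∀ k, k ≠ i → x k = y k) :
    ∃ h a b : ℕ, pos d x = 2 ^ ((i : ℕ) + 1) * h + a ∧ pos d y = 2 ^ ((i : ℕ) + 1) * h + b ∧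
      a + b + 1 = 2 ^ ((i : ℕ) + 1) ∧ a < 2 ^ ((i : ℕ) + 1) ∧ b < 2 ^ ((i : ℕ) + 1) := by
  refine ⟨∑ t ∈ Finset.range (d - ((i : ℕ) + 1)), bit d ((i : ℕ) + 1 + t) x * 2 ^ t,
    ∑ j ∈ Finset.range ((i : ℕ) + 1), bit d j x * 2 ^ j,
    ∑ j ∈ Finset.range ((i : ℕ) + 1), bit d j y * 2 ^ j,
    pos_decomp x i, ?_, ?_, ?_, ?_⟩
  · rw [pos_decomp y i]
    congr 2
    refine Finset.sum_congr rfl fun t _ => ?_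
    rw [bit_high hk (by omega)]
  · have : (∑ j ∈ Finset.range ((i : ℕ) + 1), bit d j x * 2 ^ j)
        + ∑ j ∈ Finset.range ((i : ℕ) + 1), bit d j y * 2 ^ j
        = ∑ j ∈ Finset.range ((i : ℕ) + 1), 2 ^ j := by
      rw [← Finset.sum_add_distrib]
      refine Finset.sum_congr rfl fun j hj => ?_
      have hj' : j ≤ (i : ℕ) := by
        simp only [Finset.mem_range] at hj; omega
      rw [← add_mul, bit_low hxy hk hj', one_mul]
    rw [this]
    exact sum_pows _
  · exact sum_bits_lt _ _ (fun j => bit_le_one d j x)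
  · exact sum_bits_lt _ _ (fun j => bit_le_one d j y)

end Edge


lemma cross_absurd {M h h' a b c e : ℕ}
    (hab : a + b + 1 = M) (hce : c + e + 1 = M)
    (h1 : M * h + a < M * h' + c) (h2 : M * h' + c < M * h + b) (h3 : M * h + b < M * h' + e) :
    False := by
  have hkey : h = h' := by
    rcases lt_trichotomy h h' with hlt | heq | hgt
    · have hle : M * (h + 1) ≤ M * h' := Nat.mul_le_mul_left M hlt
      rw [Nat.mul_succ] at hle
      omega
    · exact heq
    · have hle : M * (h' + 1) ≤ M * h := Nat.mul_le_mul_left M hgt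
      rw [Nat.mul_succ] at hle
      omega
  subst hkey
  omega



/-- the set of coordinates where the two endpoints differ, as a function on `Sym2`. -/
noncomputable def diff {d : ℕ} (e : Sym2 (Fin d → Bool)) : Finset (Fin d) :=
  Sym2.lift ⟨fun x y => Finset.univ.filter (fun k => x k ≠ y k), by
    intro x y
    ext k
    simp only [Finset.mem_filter, Finset.mem_univ, true_and]
    exact ne_comm⟩ e

lemma diff_mk {d : ℕ} (x y : Fin d → Bool) :
    diff s(x, y) = Finset.univ.filter (fun k => x k ≠ y k) := rfl

lemma diff_card {d : ℕ} (e : Sym2 (Fin d → Bool)) (he : e ∈ (hypercubeGraph d).edgeSet) :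
    (diff e).card = 1 := by
  induction e with
  | _ x y =>
    rw [SimpleGraph.mem_edgeSet] at he
    rw [diff_mk]
    have he' : hammingDist x y = 1 := he
    unfold hammingDist at he'
    convert he'

lemma diff_nonempty {d : ℕ} (e : Sym2 (Fin d → Bool)) (he : e ∈ (hypercubeGraph d).edgeSet) :
    (diff e).Nonempty :=
  Finset.card_pos.mp (by rw [diff_card e he]; norm_num)

/-- the coordinate flipped by an edge; this is the page assignment. -/
noncomputable def flipCoord {d : ℕ} (e : (hypercubeGraph d).edgeSet) : Fin d :=
  (diff e.1).min' (diff_nonempty e.1 e.2)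

lemma diff_eq_singleton {d : ℕ} (e : (hypercubeGraph d).edgeSet) :
    diff e.1 = {flipCoord e} := by
  obtain ⟨a, ha⟩ := Finset.card_eq_one.mp (diff_card e.1 e.2)
  have : flipCoord e ∈ diff e.1 := (diff e.1).min'_mem _
  rw [ha] at this ⊢
  rw [Finset.mem_singleton] at this
  rw [this]

lemma flip_spec {d : ℕ} (e : (hypercubeGraph d).edgeSet) {x y : Fin d → Bool}
    (hxy : e.1 = s(x, y)) :
    x (flipCoord e) ≠ y (flipCoord e) ∧ ∀ k, k ≠ flipCoord e → x k = y k := by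
  have h := diff_eq_singleton e
  rw [hxy, diff_mk] at h
  have hmem : ∀ k : Fin d, (x k ≠ y k) ↔ k = flipCoord e := by
    intro k
    constructor
    · intro hk
      have : k ∈ ({flipCoord e} : Finset (Fin d)) := h ▸ (by simp [hk])
      simpa using this
    · rintro rfl
      have : flipCoord e ∈ Finset.univ.filter (fun k => x k ≠ y k) := by
        rw [h]; simp
      simpa using this
  exact ⟨(hmem _).mpr rfl, fun k hk => by
    by_contra hne
    exact hk ((hmem k).mp hne)⟩


lemma bool_resolve : ∀ p q r : Bool, r ≠ p → r ≠ q → p = q := by decide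

variable {d : ℕ}

lemma hcard (d : ℕ) : (2 : ℕ) ^ d = Fintype.card (Fin d → Bool) := by
  simp [Fintype.card_fun]

/-- the spine order. -/
noncomputable def ord' (d : ℕ) : (Fin d → Bool) ≃ Fin (Fintype.card (Fin d → Bool)) :=
  (ordEquiv d).trans (finCongr (hcard d))

lemma ord'_lt_iff (a b : Fin d → Bool) : ord' d a < ord' d b ↔ pos d a < pos d b := Iff.rfl

/-- the explicit `d`-page matching book embedding of the hypercube. -/
noncomputable def hcEmbedding (d : ℕ) : MatchingBookEmbedding (hypercubeGraph d) d where
  ord := ord' d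
  page := flipCoord
  matching := by
    intro e f hef hpage v hve hvf
    obtain ⟨z, hz⟩ := Sym2.mem_iff_exists.mp hve
    obtain ⟨w, hw⟩ := Sym2.mem_iff_exists.mp hvf
    obtain ⟨hz1, hz2⟩ := flip_spec e hz
    obtain ⟨hw1, hw2⟩ := flip_spec f hw
    rw [← hpage] at hw1 hw2
    have hzw : z = w := by
      funext k
      by_cases hk : k = flipCoord e
      · subst hk
        exact bool_resolve _ _ _ hz1 hw1
      · rw [← hz2 k hk, hw2 k hk]
    apply hef
    apply Subtype.ext
    rw [hz, hw, hzw]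
  noncross := by
    intro e f hpage a b c dd he hf hac hcb hbd
    obtain ⟨ha1, ha2⟩ := flip_spec e he
    obtain ⟨hc1, hc2⟩ := flip_spec f hf
    rw [← hpage] at hc1 hc2
    obtain ⟨h, la, lb, hA, hB, hab, _, _⟩ := edge_pos ha1 ha2
    obtain ⟨h', lc, ld, hC, hD, hcd, _, _⟩ := edge_pos hc1 hc2
    rw [ord'_lt_iff] at hac hcb hbd
    rw [hA, hC] at hac
    rw [hC, hB] at hcb
    rw [hB, hD] at hbd
    exact cross_absurd hab hcd hac hcb hbd

/-- the base vertex (all-false string). -/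
def v0 (d : ℕ) : Fin d → Bool := fun _ => false

lemma v0_edge (i : Fin d) : s(v0 d, Function.update (v0 d) i true) ∈ (hypercubeGraph d).edgeSet := by
  rw [SimpleGraph.mem_edgeSet]
  show hammingDist (v0 d) (Function.update (v0 d) i true) = 1
  show (Finset.univ.filter fun k => v0 d k ≠ Function.update (v0 d) i true k).card = 1
  have : (Finset.univ.filter fun k => v0 d k ≠ Function.update (v0 d) i true k) = {i} := by
    ext k
    simp only [Finset.mem_filter, Finset.mem_univ, true_and, Finset.mem_singleton]
    by_cases hk : k = i
    · subst hk; simp [v0, Function.update_self]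
    · simp [v0, Function.update_of_ne hk, hk]
  rw [this, Finset.card_singleton]

/-- the `d` edges at the base vertex. -/
noncomputable def baseEdge (d : ℕ) (i : Fin d) : (hypercubeGraph d).edgeSet :=
  ⟨s(v0 d, Function.update (v0 d) i true), v0_edge i⟩

lemma baseEdge_ne (i j : Fin d) (hij : i ≠ j) : baseEdge d i ≠ baseEdge d j := by
  intro h
  have h2 := congrArg Subtype.val h
  simp only [baseEdge, Sym2.eq_iff] at h2
  rcases h2 with ⟨_, h3⟩ | ⟨h3, _⟩
  · have := congrFun h3 i
    rw [Function.update_self, Function.update_of_ne hij] at this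
    simp [v0] at this
  · have := congrFun h3 j
    rw [Function.update_self] at this
    simp [v0] at this

theorem lower_bound (k : ℕ) (B : MatchingBookEmbedding (hypercubeGraph d) k) : d ≤ k := by
  have hinj : Function.Injective (fun i : Fin d => B.page (baseEdge d i)) := by
    intro i j hij
    by_contra hne
    have hne' : baseEdge d i ≠ baseEdge d j := baseEdge_ne i j hne
    have hv : v0 d ∈ ((baseEdge d i : (hypercubeGraph d).edgeSet) : Sym2 (Fin d → Bool)) :=
      Sym2.mem_mk_left _ _
    have hv' : v0 d ∈ ((baseEdge d j : (hypercubeGraph d).edgeSet) : Sym2 (Fin d → Bool)) :=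
      Sym2.mem_mk_left _ _
    exact B.matching _ _ hne' hij (v0 d) hv hv'
  simpa using Fintype.card_le_of_injective _ hinj

end HCaux

/-- The hypercube `Q_d` (`d ≥ 1`) is dispersable: `mbt (Q_d) = d`. -/
theorem stmt_14 (d : ℕ) (hd : 1 ≤ d) :
    mbt (hypercubeGraph d) = d := by
  have hmem : d ∈ {k | Nonempty (MatchingBookEmbedding (hypercubeGraph d) k)} :=
    ⟨HCaux.hcEmbedding d⟩
  refine le_antisymm (Nat.sInf_le hmem) ?_
  refine le_csInf ⟨d, hmem⟩ ?_
  rintro k ⟨B⟩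
  exact HCaux.lower_bound k B
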